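/- Let A be a Hermitian n×n matrix, S : C^{n×n} → C^{n×n} a positivity-preserving linear map, and M : ℍ → C^{n×n} the solution of -M(z)⁻¹ = z·I - A + S[M(z)] with Im M(z) positive definite, admitting the representation M(z) = ∫_ℝ (τ - z)⁻¹ V(dτ) with V(ℝ) = I. Suppose z ∈ ℍ satisfies dist(z, spec A) > 2‖S‖^{1/2} and ‖M(z)‖ ≤ 2/dist(z, spec A), where ‖S‖ is the operator norm of S with respect to the operator norm on matrices. Then ‖Im M(z)‖ ≤ 4·Im z / (dist(z, spec A)² - 4‖S‖). -/

import Mathlib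

open MeasureTheory

/-- Bounded operators on the Euclidean space `ℂⁿ` (identified with `n×n` complex matrices
with the operator norm). -/
abbrev Op (n : ℕ) := EuclideanSpace ℂ (Fin n) →L[ℂ] EuclideanSpace ℂ (Fin n)

/-- The imaginary part `(T - T*)/(2i)` of an operator. -/
noncomputable def imOp {n : ℕ} (T : Op n) : Op n :=
  (2 * Complex.I)⁻¹ • (T - ContinuousLinearMap.adjoint T)

set_option maxHeartbeats 1000000
set_option synthInstance.maxHeartbeats 200000

lemma imOp_eq {n : ℕ} (T : Op n) : imOp T = (2 * Complex.I)⁻¹ • (T - star T) := by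
  rw [imOp, ContinuousLinearMap.star_eq_adjoint]

lemma pos_shift {n : ℕ} (H : Op n) (hH : IsSelfAdjoint H) :
    ((‖H‖ : ℂ) • (1 : Op n) + H).IsPositive := by
  refine ContinuousLinearMap.isPositive_def'.mpr ⟨?_, ?_⟩
  · exact IsSelfAdjoint.smul (by simp [Complex.conj_ofReal, isSelfAdjoint_iff])
      (IsSelfAdjoint.one (Op n)) |>.add hH
  · intro x
    have h1 : ‖(inner ℂ (H x) x : ℂ)‖ ≤ ‖H x‖ * ‖x‖ := norm_inner_le_norm _ _
    have h2 : ‖H x‖ ≤ ‖H‖ * ‖x‖ := H.le_opNorm x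
    have h3 : |RCLike.re (inner ℂ (H x) x : ℂ)| ≤ ‖(inner ℂ (H x) x : ℂ)‖ :=
      RCLike.abs_re_le_norm _
    have h4 : (((‖H‖ : ℂ) • (1 : Op n) + H)).reApplyInnerSelf x
        = ‖H‖ * ‖x‖ ^ 2 + RCLike.re (inner ℂ (H x) x : ℂ) := by
      rw [ContinuousLinearMap.reApplyInnerSelf]
      simp only [ContinuousLinearMap.add_apply, ContinuousLinearMap.smul_apply,
        ContinuousLinearMap.one_apply, inner_add_left, inner_smul_left, map_add,
        Complex.conj_ofReal]
      have hxx : (inner ℂ x x : ℂ).re = ‖x‖ ^ 2 := by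
        have h6 := inner_self_eq_norm_sq (𝕜 := ℂ) x
        simpa [RCLike.re_to_complex] using h6
      simp only [RCLike.re_to_complex]
      rw [Complex.re_ofReal_mul, hxx]
    rw [h4]
    nlinarith [norm_nonneg x, norm_nonneg (H x), abs_le.mp h3]

lemma S_selfAdj {n : ℕ} (S : Op n →L[ℂ] Op n)
    (hS : ∀ T : Op n, T.IsPositive → (S T).IsPositive)
    {H : Op n} (hH : IsSelfAdjoint H) : IsSelfAdjoint (S H) := by
  have h1 := (hS _ (pos_shift H hH)).isSelfAdjoint
  have h2 := (hS 1 ContinuousLinearMap.isPositive_one).isSelfAdjoint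
  have hEq : S H = S ((‖H‖ : ℂ) • (1 : Op n) + H) - (‖H‖ : ℂ) • S 1 := by
    rw [map_add, S.map_smul]; abel
  rw [hEq]
  exact h1.sub (IsSelfAdjoint.smul (by simp [Complex.conj_ofReal, isSelfAdjoint_iff]) h2)

lemma S_star {n : ℕ} (S : Op n →L[ℂ] Op n)
    (hS : ∀ T : Op n, T.IsPositive → (S T).IsPositive)
    (T : Op n) : star (S T) = S (star T) := by
  set H : Op n := (2 : ℂ)⁻¹ • (T + star T) with hHdef
  set K : Op n := (2 * Complex.I)⁻¹ • (T - star T) with hKdef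
  have hH : IsSelfAdjoint H := by
    rw [isSelfAdjoint_iff, hHdef, star_smul, star_add T (star T), star_star]
    simp [add_comm]
  have hK : IsSelfAdjoint K := by
    rw [isSelfAdjoint_iff, hKdef, star_smul, star_sub T (star T), star_star,
      show star (2 * Complex.I)⁻¹ = -(2 * Complex.I)⁻¹ by simp [Complex.ext_iff],
      neg_smul ((2 * Complex.I)⁻¹) (star T - T), ← smul_neg, neg_sub (star T) T]
  have hcoef : Complex.I * (2 * Complex.I)⁻¹ = 2⁻¹ := by
    field_simp
  have hT : H + Complex.I • K = T := by
    rw [hHdef, hKdef, smul_smul, hcoef]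
    module
  have hT' : H - Complex.I • K = star T := by
    rw [hHdef, hKdef, smul_smul, hcoef]
    module
  calc star (S T) = star (S H + Complex.I • S K) := by
        rw [← S.map_smul, ← map_add, hT]
    _ = star (S H) - Complex.I • star (S K) := by
        rw [star_add (S H) (Complex.I • S K), star_smul, Complex.star_def, Complex.conj_I,
          sub_eq_add_neg, ← neg_smul Complex.I (star (S K))]
    _ = S H - Complex.I • S K := by
        rw [(S_selfAdj S hS hH).star_eq, (S_selfAdj S hS hK).star_eq]
    _ = S (star T) := by rw [← S.map_smul, ← map_sub, hT']

theorem stmt_3 {n : ℕ} (A : Op n) (hA : IsSelfAdjoint A)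
    (S : Op n →L[ℂ] Op n)
    (hS : ∀ T : Op n, T.IsPositive → (S T).IsPositive)
    (M : ℂ → Op n)
    (hDyson : ∀ w : ℂ, 0 < w.im → (w • (1 : Op n) - A + S (M w)) * M w = -1)
    (hposdef : ∀ w : ℂ, 0 < w.im → (imOp (M w)).IsPositive ∧
      ∀ x : EuclideanSpace ℂ (Fin n), x ≠ 0 → 0 < (@inner ℂ _ _ x (imOp (M w) x)).re)
    (μ : Measure ℝ) [IsFiniteMeasure μ] (f : ℝ → Op n)
    (hf : ∀ τ : ℝ, (f τ).IsPositive)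
    (hTot : ∫ τ, f τ ∂μ = 1)
    (hRep : ∀ w : ℂ, 0 < w.im → M w = ∫ τ, ((τ : ℂ) - w)⁻¹ • f τ ∂μ)
    (z : ℂ) (hz : 0 < z.im)
    (hdist : 2 * Real.sqrt ‖S‖ < Metric.infDist z (spectrum ℂ A))
    (hMz : ‖M z‖ ≤ 2 / Metric.infDist z (spectrum ℂ A)) :
    ‖imOp (M z)‖ ≤ 4 * z.im / (Metric.infDist z (spectrum ℂ A) ^ 2 - 4 * ‖S‖) := by
  set d := Metric.infDist z (spectrum ℂ A) with hd
  have hs0 : (0:ℝ) ≤ ‖S‖ := S.opNorm_nonneg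
  have hd0 : 0 < d := lt_of_le_of_lt (by positivity) hdist
  have hd2 : 4 * ‖S‖ < d ^ 2 := by
    nlinarith [Real.sq_sqrt hs0, Real.sqrt_nonneg ‖S‖]
  set N : Op n := z • (1 : Op n) - A + S (M z) with hN
  have hNM : N * M z = -1 := hDyson z hz
  set B : Op n := -N with hB
  have hBM : B * M z = 1 := by
    rw [hB]
    exact (neg_mul N (M z)).trans (by rw [hNM, neg_neg])
  have hMB : M z * B = 1 := by
    have h1 : (M z).toLinearMap * B.toLinearMap = 1 := by
      rw [mul_eq_one_comm]
      refine LinearMap.ext fun x => ?_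
      have := congrArg (fun g : Op n => g x) hBM
      simpa using this
    refine ContinuousLinearMap.ext fun x => ?_
    have := congrArg
      (fun g : EuclideanSpace ℂ (Fin n) →ₗ[ℂ] EuclideanSpace ℂ (Fin n) => g x) h1
    simpa using this
  have hstar1 : star (M z) * star B = 1 := by rw [← star_mul, hBM, star_one]
  have key : M z - star (M z) = star (M z) * (star B - B) * M z := by
    have h2 : star (M z) * (star B - B) * M z
        = (star (M z) * star B) * M z - star (M z) * (B * M z) := by
      rw [mul_sub (star (M z)) (star B) B, sub_mul (star (M z) * star B) (star (M z) * B) (M z),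
        mul_assoc (star (M z)) B (M z)]
    rw [h2, hstar1, hBM, one_mul, mul_one]
  have him : imOp (M z) = star (M z) * ((2 * Complex.I)⁻¹ • (star B - B)) * M z := by
    rw [imOp_eq, key, mul_smul_comm, smul_mul_assoc]
  have hsN : star N = (starRingEnd ℂ z) • (1 : Op n) - A + S (star (M z)) := by
    rw [hN, star_add (z • (1 : Op n) - A) (S (M z)), star_sub (z • (1 : Op n)) A,
      star_smul, star_one, hA.star_eq, S_star S hS, Complex.star_def]
  have h1 : star B - B = (z - starRingEnd ℂ z) • (1 : Op n) + S (M z - star (M z)) := by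
    have h0 : star B - B = N - star N := by rw [hB, star_neg N]; abel
    rw [h0, hsN, hN, map_sub, sub_smul z ((starRingEnd ℂ) z) (1 : Op n)]
    abel
  have hzc : (2 * Complex.I)⁻¹ * (z - starRingEnd ℂ z) = (z.im : ℂ) := by
    rw [Complex.sub_conj]
    field_simp
    push_cast
    ring
  have hC : (2 * Complex.I)⁻¹ • (star B - B)
      = (z.im : ℂ) • (1 : Op n) + S (imOp (M z)) := by
    rw [h1, smul_add, smul_smul, hzc, ← S.map_smul, ← imOp_eq]
  have hCnorm : ‖(z.im : ℂ) • (1 : Op n) + S (imOp (M z))‖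
      ≤ z.im + ‖S‖ * ‖imOp (M z)‖ := by
    refine le_trans (norm_add_le _ _) (add_le_add ?_ (S.le_opNorm _))
    rw [norm_smul ((z.im : ℂ)) (1 : Op n), Complex.norm_real, Real.norm_eq_abs,
      abs_of_pos hz]
    calc z.im * ‖(1 : Op n)‖ ≤ z.im * 1 := by
          have h5 : ‖(1 : Op n)‖ ≤ 1 := ContinuousLinearMap.norm_id_le
          nlinarith
      _ = z.im := mul_one _
  have hfin : ‖imOp (M z)‖ ≤ ‖M z‖ * ((z.im + ‖S‖ * ‖imOp (M z)‖) * ‖M z‖) := by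
    conv_lhs => rw [him, hC]
    calc ‖star (M z) * ((z.im : ℂ) • (1 : Op n) + S (imOp (M z))) * M z‖
        ≤ ‖star (M z) * ((z.im : ℂ) • (1 : Op n) + S (imOp (M z)))‖ * ‖M z‖ :=
          norm_mul_le _ _
      _ ≤ (‖star (M z)‖ * ‖(z.im : ℂ) • (1 : Op n) + S (imOp (M z))‖) * ‖M z‖ :=
          mul_le_mul_of_nonneg_right (norm_mul_le _ _) (norm_nonneg _)
      _ = ‖M z‖ * (‖(z.im : ℂ) • (1 : Op n) + S (imOp (M z))‖ * ‖M z‖) := by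
          have h6 : ‖star (M z)‖ = ‖M z‖ := by
            rw [ContinuousLinearMap.star_eq_adjoint]
            exact LinearIsometryEquiv.norm_map ContinuousLinearMap.adjoint (M z)
          rw [h6]; ring
      _ ≤ ‖M z‖ * ((z.im + ‖S‖ * ‖imOp (M z)‖) * ‖M z‖) :=
          mul_le_mul_of_nonneg_left
            (mul_le_mul_of_nonneg_right hCnorm (norm_nonneg _)) (norm_nonneg _)
  have hm0 : (0:ℝ) ≤ ‖M z‖ := norm_nonneg _
  have ht0 : (0:ℝ) ≤ ‖imOp (M z)‖ := norm_nonneg _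
  have hmd : ‖M z‖ * d ≤ 2 := by
    rw [← le_div_iff₀ hd0]; exact hMz
  have hyst : (0:ℝ) ≤ z.im + ‖S‖ * ‖imOp (M z)‖ :=
    add_nonneg hz.le (mul_nonneg hs0 ht0)
  rw [le_div_iff₀ (by linarith)]
  nlinarith [mul_le_mul_of_nonneg_right hfin (sq_nonneg d),
    mul_le_mul hmd hmd (mul_nonneg hm0 hd0.le) (by norm_num : (0:ℝ) ≤ 2),
    mul_nonneg (mul_nonneg hm0 hm0) hyst, mul_nonneg hyst (mul_nonneg hm0 hd0.le)]
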